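/- Let X be a topological space and let I be a sheaf of abelian groups on X which is an injective object in the category of sheaves of abelian groups on X. Then I is flabby: for every open subset U ⊆ X, the restriction homomorphism Γ(X; I) → Γ(U; I) is surjective. -/

import Mathlib

/-!
STATEMENT 5: An injective object in the category of sheaves of abelian groups on a
topological space `X` is flabby: for every open `U ⊆ X`, the restriction map
`Γ(X; I) → Γ(U; I)` is surjective.
-/

open CategoryTheory Limits TopologicalSpace Opposite

universe u

noncomputable section InjFlabbyAux

variable (X : TopCat.{u})

/-- The free sheaf of abelian groups on the open set `V`. -/
abbrev flabbyAuxZ (V : Opens X) : Sheaf (Opens.grothendieckTopology X) AddCommGrpCat.{u} :=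
  (presheafToSheaf (Opens.grothendieckTopology X) _).obj (yoneda.obj V ⋙ AddCommGrpCat.free)

/-- Hom from the free sheaf on `V` into a sheaf `I` is sections of `I` over `V`. -/
def flabbyAuxE (V : Opens X) (I : Sheaf (Opens.grothendieckTopology X) AddCommGrpCat.{u}) :
    (flabbyAuxZ X V ⟶ I) ≃ (I.val ⋙ forget AddCommGrpCat).obj (op V) :=
  ((sheafificationAdjunction (Opens.grothendieckTopology X) AddCommGrpCat).homEquiv _ I).trans
    (((AddCommGrpCat.adj.whiskerRight (Opens X)ᵒᵖ).homEquiv (yoneda.obj V) I.val).trans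
      yonedaEquiv)

lemma flabbyAuxE_naturality {U V : Opens X} (f : U ⟶ V)
    (I : Sheaf (Opens.grothendieckTopology X) AddCommGrpCat.{u}) (φ : flabbyAuxZ X V ⟶ I) :
    flabbyAuxE X U I
      ((presheafToSheaf (Opens.grothendieckTopology X) _).map
        (Functor.whiskerRight (yoneda.map f) AddCommGrpCat.free) ≫ φ) =
    (I.val ⋙ forget AddCommGrpCat).map f.op (flabbyAuxE X V I φ) := by
  simp only [flabbyAuxE, Equiv.trans_apply]
  rw [Adjunction.homEquiv_naturality_left]
  erw [Adjunction.homEquiv_naturality_left]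
  exact (yonedaEquiv_naturality _ f).symm

end InjFlabbyAux

theorem injective_sheaf_is_flabby (X : TopCat.{u})
    (I : Sheaf (Opens.grothendieckTopology X) AddCommGrpCat.{u})
    (hI : Injective I) (U : Opens X) :
    Function.Surjective (I.val.map (homOfLE (le_top : U ≤ ⊤)).op) := by
  intro s
  set f : U ⟶ (⊤ : Opens X) := homOfLE le_top
  set m : flabbyAuxZ X U ⟶ flabbyAuxZ X ⊤ :=
    (presheafToSheaf (Opens.grothendieckTopology X) _).map
      (Functor.whiskerRight (yoneda.map f) AddCommGrpCat.free) with hm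
  have hmono1 : ∀ (W : (Opens X)ᵒᵖ), Mono ((Functor.whiskerRight (yoneda.map f) AddCommGrpCat.free).app W) := by
    intro W
    have : Mono ((yoneda.map f).app W) := by
      rw [CategoryTheory.mono_iff_injective]
      intro a b _
      exact Subsingleton.elim (α := unop W ⟶ U) a b
    exact AddCommGrpCat.free.map_mono _
  have hmono : Mono m := by
    have : Mono (Functor.whiskerRight (yoneda.map f) AddCommGrpCat.free) :=
      NatTrans.mono_of_mono_app _
    exact (presheafToSheaf (Opens.grothendieckTopology X) _).map_mono _
  obtain ⟨φ, hφ⟩ := Injective.factors ((flabbyAuxE X U I).symm s) m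
  refine ⟨flabbyAuxE X ⊤ I φ, ?_⟩
  have h2 := flabbyAuxE_naturality X f I φ
  rw [hφ, Equiv.apply_symm_apply] at h2
  exact h2.symm
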